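/- Let D be an integer with D > 2, let η be a nondegenerate symmetric real D×D matrix, and let k : ℝ^D → ℝ^D be a smooth vector field satisfying the flat conformal Killing equation ∂_μ k_ν + ∂_ν k_μ = (2/D) η_{μν} Σ_ρ ∂_ρ k^ρ on all of ℝ^D, where k_μ := Σ_ν η_{μν} k^ν. Then k is a quadratic polynomial of conformal type: there exist a vector ξ ∈ ℝ^D, a matrix λ with λ_{μν} := η_{μρ} λ^ρ{}_ν antisymmetric, a scalar λ_D ∈ ℝ, and a vector Λ_K ∈ ℝ^D such that for all x ∈ ℝ^D, k^μ(x) = ξ^μ + Σ_ν λ^μ{}_ν x^ν + λ_D x^μ + (x·x) Λ_K^μ − 2 x^μ (x·Λ_K), where x·y := Σ_{μ,ν} η_{μν} x^μ y^ν. (These are translations, Lorentz rotations, dilatations and special conformal transformations.) -/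

import Mathlib

noncomputable section

/-- Partial derivative `∂_i f` of a scalar function on `ℝ^D`. -/
def pd {D : ℕ} (i : Fin D) (f : (Fin D → ℝ) → ℝ) (x : Fin D → ℝ) : ℝ :=
  fderiv ℝ f x (Pi.single i 1)

namespace Stmt15
variable {D : ℕ}

lemma pd_contDiff {f : (Fin D → ℝ) → ℝ} (hf : ContDiff ℝ (⊤:ℕ∞) f) (i : Fin D) :
    ContDiff ℝ (⊤:ℕ∞) (pd i f) := by
  have h1 : ContDiff ℝ (⊤:ℕ∞) (fderiv ℝ f) := hf.fderiv_right (by simp)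
  exact (ContinuousLinearMap.apply ℝ ℝ (Pi.single i 1)).contDiff.comp h1

lemma diffAt {f : (Fin D → ℝ) → ℝ} (hf : ContDiff ℝ (⊤:ℕ∞) f) {x} :
    DifferentiableAt ℝ f x := (hf.differentiable (by norm_cast)).differentiableAt

lemma pd_add {f g : (Fin D → ℝ) → ℝ} {x} (hf : DifferentiableAt ℝ f x)
    (hg : DifferentiableAt ℝ g x) (i : Fin D) :
    pd i (fun y => f y + g y) x = pd i f x + pd i g x := by
  simp [pd, fderiv_fun_add hf hg]

lemma pd_sub {f g : (Fin D → ℝ) → ℝ} {x} (hf : DifferentiableAt ℝ f x)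
    (hg : DifferentiableAt ℝ g x) (i : Fin D) :
    pd i (fun y => f y - g y) x = pd i f x - pd i g x := by
  simp [pd, fderiv_fun_sub hf hg]

lemma pd_const_mul {f : (Fin D → ℝ) → ℝ} {x} (hf : DifferentiableAt ℝ f x) (c : ℝ) (i : Fin D) :
    pd i (fun y => c * f y) x = c * pd i f x := by
  simp [pd, fderiv_const_mul hf c]

lemma pd_sum {ι : Type*} (s : Finset ι) {f : ι → (Fin D → ℝ) → ℝ} {x}
    (hf : ∀ j ∈ s, DifferentiableAt ℝ (f j) x) (i : Fin D) :
    pd i (fun y => ∑ j ∈ s, f j y) x = ∑ j ∈ s, pd i (f j) x := by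
  simp [pd, fderiv_fun_sum hf]

lemma pd_mul {f g : (Fin D → ℝ) → ℝ} {x} (hf : DifferentiableAt ℝ f x)
    (hg : DifferentiableAt ℝ g x) (i : Fin D) :
    pd i (fun y => f y * g y) x = f x * pd i g x + g x * pd i f x := by
  simp [pd, fderiv_fun_mul hf hg]

lemma pd_coord (i j : Fin D) (x : Fin D → ℝ) :
    pd i (fun y => y j) x = if j = i then 1 else 0 := by
  have h : (fun y : Fin D → ℝ => y j)
      = (ContinuousLinearMap.proj j : (Fin D → ℝ) →L[ℝ] ℝ) := rfl
  rw [pd, h, ContinuousLinearMap.fderiv]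
  simp [Pi.single_apply]

lemma pd_comm {f : (Fin D → ℝ) → ℝ} (hf : ContDiff ℝ (⊤:ℕ∞) f) (i j : Fin D) (x) :
    pd i (pd j f) x = pd j (pd i f) x := by
  have hdf : ContDiff ℝ (⊤:ℕ∞) (fderiv ℝ f) := hf.fderiv_right (by simp)
  have key : ∀ (v w : Fin D → ℝ),
      fderiv ℝ (fun y => fderiv ℝ f y v) x w = fderiv ℝ (fderiv ℝ f) x w v := by
    intro v w
    have := fderiv_clm_apply (hdf.differentiable (by simp) |>.differentiableAt)
      (differentiableAt_const v) (x := x)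
    simp at this
    rw [this]; rfl
  have hsymm : IsSymmSndFDerivAt ℝ f x :=
    (hf.contDiffAt).isSymmSndFDerivAt (by simp [minSmoothness_of_isRCLikeNormedField]; exact WithTop.coe_le_coe.mpr le_top)
  show fderiv ℝ (fun y => fderiv ℝ f y (Pi.single j 1)) x (Pi.single i 1)
      = fderiv ℝ (fun y => fderiv ℝ f y (Pi.single i 1)) x (Pi.single j 1)
  rw [key, key]
  exact hsymm.eq _ _

lemma clm_eval (L : (Fin D → ℝ) →L[ℝ] ℝ) (v : Fin D → ℝ) :
    L v = ∑ i, v i * L (Pi.single i 1) := by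
  conv_lhs => rw [← Finset.univ_sum_single v]
  rw [map_sum]
  refine Finset.sum_congr rfl fun i _ => ?_
  have : (Pi.single i (v i) : Fin D → ℝ) = v i • (Pi.single i 1 : Fin D → ℝ) := by
    ext j; by_cases h : j = i <;> simp [Pi.single_apply, h]
  rw [this, map_smul, smul_eq_mul]

lemma eq_const_of_pd_zero {g : (Fin D → ℝ) → ℝ} (hg : Differentiable ℝ g)
    (h : ∀ i x, pd i g x = 0) (x : Fin D → ℝ) : g x = g 0 := by
  refine is_const_of_fderiv_eq_zero hg (fun y => ?_) x 0
  ext v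
  rw [ContinuousLinearMap.zero_apply, clm_eval]
  refine Finset.sum_eq_zero fun i _ => ?_
  rw [show (fderiv ℝ g y) (Pi.single i 1) = pd i g y from rfl, h]
  ring

lemma pd_linear (a : Fin D → ℝ) (i : Fin D) (x : Fin D → ℝ) :
    pd i (fun y => ∑ j, a j * y j) x = a i := by
  rw [pd_sum _ (fun j _ => by fun_prop)]
  have : ∀ j, pd i (fun y => a j * y j) x = a j * (if j = i then 1 else 0) := fun j => by
    rw [pd_const_mul (by fun_prop), pd_coord]
  simp [this]

lemma pd_quad (C : Fin D → Fin D → ℝ) (i : Fin D) (x : Fin D → ℝ) :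
    pd i (fun y => ∑ a, ∑ b, C a b * y a * y b) x
      = (∑ b, C i b * x b) + (∑ a, C a i * x a) := by
  have h1 : ∀ a b, pd i (fun y => C a b * y a * y b) x
      = (C a b * x a) * (if b = i then 1 else 0)
        + x b * (C a b * (if a = i then 1 else 0)) := by
    intro a b
    rw [pd_mul (f := fun y => C a b * y a) (g := fun y => y b) (by fun_prop) (by fun_prop),
      pd_coord, pd_const_mul (by fun_prop), pd_coord]
  have h2 : ∀ a, pd i (fun y => ∑ b, C a b * y a * y b) x
      = ∑ b, ((C a b * x a) * (if b = i then 1 else 0)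
        + x b * (C a b * (if a = i then 1 else 0))) := by
    intro a
    rw [pd_sum _ (fun b _ => by fun_prop)]
    exact Finset.sum_congr rfl fun b _ => h1 a b
  rw [pd_sum _ (fun a _ => by fun_prop)]
  rw [Finset.sum_congr rfl fun a _ => h2 a]
  simp only [Finset.sum_add_distrib]
  rw [add_comm]
  congr 1
  · rw [Finset.sum_comm]
    simp [mul_ite, mul_one, mul_zero, Finset.sum_ite_eq', Finset.mem_univ, mul_comm]
  · simp [mul_ite, mul_one, mul_zero, Finset.sum_ite_eq', Finset.mem_univ]

/-- Reconstruction: a smooth function whose second partials are the constants `C i j`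
is the explicit quadratic polynomial. -/
lemma recon {g : (Fin D → ℝ) → ℝ} (hg : ContDiff ℝ (⊤:ℕ∞) g) (C : Fin D → Fin D → ℝ)
    (hC : ∀ i j x, pd i (pd j g) x = C i j) (x : Fin D → ℝ) :
    g x = g 0 + (∑ j, pd j g 0 * x j) + (1/2) * ∑ a, ∑ b, C a b * x a * x b := by
  have hCsymm : ∀ i j, C i j = C j i := fun i j => by
    rw [← hC i j 0, pd_comm hg, hC]
  have hdg : ∀ j, Differentiable ℝ (pd j g) :=
    fun j => (pd_contDiff hg j).differentiable (by norm_cast)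
  have step1 : ∀ j x, pd j g x = pd j g 0 + ∑ i, C i j * x i := by
    intro j x
    have h0 : ∀ i y, pd i (fun z => pd j g z - ∑ i', C i' j * z i') y = 0 := by
      intro i y
      rw [pd_sub ((hdg j).differentiableAt) (by fun_prop), pd_linear, hC]
      ring
    have := eq_const_of_pd_zero (g := fun z => pd j g z - ∑ i', C i' j * z i')
      ((hdg j).sub (by fun_prop)) h0 x
    simp at this
    linarith [this]
  have h0 : ∀ j y, pd j (fun z => g z - ((∑ i, pd i g 0 * z i)
      + (1/2) * ∑ a, ∑ b, C a b * z a * z b)) y = 0 := by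
    intro j y
    rw [pd_sub (hg.differentiable (by norm_cast) |>.differentiableAt) (by fun_prop),
      pd_add (by fun_prop) (by fun_prop), pd_linear,
      pd_const_mul (by fun_prop), pd_quad, step1]
    have : ∑ b, C j b * y b = ∑ b, C b j * y b :=
      Finset.sum_congr rfl fun b _ => by rw [hCsymm j b]
    rw [this]; ring
  have := eq_const_of_pd_zero (g := fun z => g z - ((∑ i, pd i g 0 * z i)
      + (1/2) * ∑ a, ∑ b, C a b * z a * z b))
    ((hg.differentiable (by norm_cast)).sub (by fun_prop)) h0 x
  simp at this
  linarith [this]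

lemma dsum_factor (c : Fin D → Fin D → ℝ) (g : Fin D → ℝ) :
    ∑ ν, ∑ ρ, c ν ρ * g ρ = ∑ ρ, (∑ ν, c ν ρ) * g ρ := by
  rw [Finset.sum_comm]
  simp [Finset.sum_mul]

end Stmt15

namespace Stmt15
variable {D : ℕ}

def klow (η : Matrix (Fin D) (Fin D) ℝ) (k : (Fin D → ℝ) → (Fin D → ℝ)) (ν : Fin D) :
    (Fin D → ℝ) → ℝ := fun y => ∑ σ, η ν σ * k y σ

def dvg (k : (Fin D → ℝ) → (Fin D → ℝ)) : (Fin D → ℝ) → ℝ :=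
  fun y => ∑ ρ, pd ρ (fun z => k z ρ) y

variable {η : Matrix (Fin D) (Fin D) ℝ} {k : (Fin D → ℝ) → (Fin D → ℝ)}

lemma comp_contDiff (hk : ContDiff ℝ (⊤:ℕ∞) k) (σ : Fin D) :
    ContDiff ℝ (⊤:ℕ∞) (fun y => k y σ) :=
  (ContinuousLinearMap.proj σ : ((Fin D) → ℝ) →L[ℝ] ℝ).contDiff.comp hk

lemma klow_contDiff (hk : ContDiff ℝ (⊤:ℕ∞) k) (ν : Fin D) :
    ContDiff ℝ (⊤:ℕ∞) (klow η k ν) :=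
  ContDiff.sum fun σ _ => contDiff_const.mul (comp_contDiff hk σ)

lemma dvg_contDiff (hk : ContDiff ℝ (⊤:ℕ∞) k) : ContDiff ℝ (⊤:ℕ∞) (dvg k) :=
  ContDiff.sum fun ρ _ => pd_contDiff (comp_contDiff hk ρ) ρ

/-- differentiated conformal Killing equation, cleared of denominators -/
lemma second_cke (hk : ContDiff ℝ (⊤:ℕ∞) k) (hD0 : (D:ℝ) ≠ 0)
    (hck : ∀ μ ν x, pd μ (klow η k ν) x + pd ν (klow η k μ) x
      = 2 / (D:ℝ) * η μ ν * dvg k x) :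
    ∀ σ μ ν x, (D:ℝ) * (pd σ (pd μ (klow η k ν)) x + pd σ (pd ν (klow η k μ)) x)
      = 2 * η μ ν * pd σ (dvg k) x := by
  intro σ μ ν x
  have hfun : (fun x => pd μ (klow η k ν) x + pd ν (klow η k μ) x)
      = (fun x => (2 / (D:ℝ) * η μ ν) * dvg k x) :=
    funext fun x => by rw [hck μ ν x]
  have h1 : pd σ (fun x => pd μ (klow η k ν) x + pd ν (klow η k μ) x) x
      = pd σ (fun x => (2 / (D:ℝ) * η μ ν) * dvg k x) x := by rw [hfun]
  rw [pd_add (diffAt (pd_contDiff (klow_contDiff hk ν) μ))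
      (diffAt (pd_contDiff (klow_contDiff hk μ) ν)),
    pd_const_mul (diffAt (dvg_contDiff hk))] at h1
  rw [h1]
  field_simp

/-- second derivatives of `k` in terms of first derivatives of its divergence -/
lemma pdpd_klow (hk : ContDiff ℝ (⊤:ℕ∞) k) (hD0 : (D:ℝ) ≠ 0)
    (hηsym : ∀ μ ν, η μ ν = η ν μ)
    (hck : ∀ μ ν x, pd μ (klow η k ν) x + pd ν (klow η k μ) x
      = 2 / (D:ℝ) * η μ ν * dvg k x) :
    ∀ μ ν ρ x, (D:ℝ) * pd μ (pd ν (klow η k ρ)) x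
      = η ν ρ * pd μ (dvg k) x + η μ ρ * pd ν (dvg k) x - η μ ν * pd ρ (dvg k) x := by
  intro μ ν ρ x
  have h1 := second_cke hk hD0 hck μ ν ρ x
  have h2 := second_cke hk hD0 hck ν ρ μ x
  have h3 := second_cke hk hD0 hck ρ μ ν x
  have s1 := pd_comm (klow_contDiff (η := η) hk ρ) ν μ x
  have s2 := pd_comm (klow_contDiff (η := η) hk μ) ν ρ x
  have s3 := pd_comm (klow_contDiff (η := η) hk ν) μ ρ x
  have e1 := hηsym ρ μ
  linear_combination (h1 + h2 - h3)/2 - (D:ℝ)/2 * s1 - (D:ℝ)/2 * s2 - (D:ℝ)/2 * s3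
    + pd ν (dvg k) x * e1

/-- third derivatives of `k` in terms of the Hessian of the divergence -/
lemma pdpdpd_klow (hk : ContDiff ℝ (⊤:ℕ∞) k) (hD0 : (D:ℝ) ≠ 0)
    (hηsym : ∀ μ ν, η μ ν = η ν μ)
    (hck : ∀ μ ν x, pd μ (klow η k ν) x + pd ν (klow η k μ) x
      = 2 / (D:ℝ) * η μ ν * dvg k x) :
    ∀ σ μ ν ρ x, (D:ℝ) * pd σ (pd μ (pd ν (klow η k ρ))) x
      = η ν ρ * pd σ (pd μ (dvg k)) x + (η μ ρ * pd σ (pd ν (dvg k)) x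
        - η μ ν * pd σ (pd ρ (dvg k)) x) := by
  intro σ μ ν ρ x
  have hd : ∀ a : Fin D, Differentiable ℝ (pd a (dvg k)) :=
    fun a => (pd_contDiff (dvg_contDiff hk) a).differentiable (by norm_cast)
  have hfun : (fun x => (D:ℝ) * pd μ (pd ν (klow η k ρ)) x)
      = (fun x => η ν ρ * pd μ (dvg k) x + (η μ ρ * pd ν (dvg k) x
          - η μ ν * pd ρ (dvg k) x)) :=
    funext fun x => by rw [pdpd_klow hk hD0 hηsym hck μ ν ρ x]; ring
  have h1 : pd σ (fun x => (D:ℝ) * pd μ (pd ν (klow η k ρ)) x) x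
      = pd σ (fun x => η ν ρ * pd μ (dvg k) x + (η μ ρ * pd ν (dvg k) x
          - η μ ν * pd ρ (dvg k) x)) x := by rw [hfun]
  rw [pd_const_mul (diffAt (pd_contDiff (pd_contDiff (klow_contDiff hk ρ) ν) μ)),
    pd_add (by fun_prop) (by fun_prop), pd_const_mul (by fun_prop),
    pd_sub (by fun_prop) (by fun_prop), pd_const_mul (by fun_prop),
    pd_const_mul (by fun_prop)] at h1
  exact h1

/-- the Hessian of the divergence vanishes -/
lemma hess_dvg (hD : 2 < D) (hηsym : ∀ μ ν, η μ ν = η ν μ) (hηnd : IsUnit η.det)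
    (hk : ContDiff ℝ (⊤:ℕ∞) k)
    (hck : ∀ μ ν x, pd μ (klow η k ν) x + pd ν (klow η k μ) x
      = 2 / (D:ℝ) * η μ ν * dvg k x) :
    ∀ a b x, pd a (pd b (dvg k)) x = 0 := by
  have hD0 : (D:ℝ) ≠ 0 := by exact Nat.cast_ne_zero.mpr (by omega)
  have Hsym : ∀ a b (x : Fin D → ℝ), pd a (pd b (dvg k)) x = pd b (pd a (dvg k)) x :=
    fun a b x => pd_comm (dvg_contDiff hk) a b x
  have Tsym : ∀ σ μ ν ρ (x : Fin D → ℝ), pd σ (pd μ (pd ν (klow η k ρ))) x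
      = pd ν (pd μ (pd σ (klow η k ρ))) x := by
    intro σ μ ν ρ x
    have e1 : pd μ (pd ν (klow η k ρ)) = pd ν (pd μ (klow η k ρ)) :=
      funext (pd_comm (klow_contDiff hk ρ) μ ν)
    have e2 : pd μ (pd σ (klow η k ρ)) = pd σ (pd μ (klow η k ρ)) :=
      funext (pd_comm (klow_contDiff hk ρ) μ σ)
    calc pd σ (pd μ (pd ν (klow η k ρ))) x
        = pd σ (pd ν (pd μ (klow η k ρ))) x := by rw [e1]
      _ = pd ν (pd σ (pd μ (klow η k ρ))) x :=
          pd_comm (pd_contDiff (klow_contDiff hk ρ) μ) σ ν x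
      _ = pd ν (pd μ (pd σ (klow η k ρ))) x := by rw [e2]
  have diamond : ∀ σ μ ν ρ (x : Fin D → ℝ),
      η ν ρ * pd σ (pd μ (dvg k)) x - η μ ν * pd σ (pd ρ (dvg k)) x
        = η σ ρ * pd ν (pd μ (dvg k)) x - η μ σ * pd ν (pd ρ (dvg k)) x := by
    intro σ μ ν ρ x
    have t1 := pdpdpd_klow hk hD0 hηsym hck σ μ ν ρ x
    have t2 := pdpdpd_klow hk hD0 hηsym hck ν μ σ ρ x
    have ts := Tsym σ μ ν ρ x
    linear_combination (-1 : ℝ) * t1 + t2 + (D:ℝ) * ts - η μ ρ * (Hsym σ ν x)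
  have hζη : ∀ a c, ∑ b, η⁻¹ a b * η b c = if a = c then 1 else 0 := by
    intro a c
    have h := Matrix.nonsing_inv_mul η hηnd
    calc ∑ b, η⁻¹ a b * η b c = (η⁻¹ * η) a c := (Matrix.mul_apply).symm
      _ = (1 : Matrix (Fin D) (Fin D) ℝ) a c := by rw [h]
      _ = _ := Matrix.one_apply
  have hηζ : ∀ a c, ∑ b, η a b * η⁻¹ b c = if a = c then 1 else 0 := by
    intro a c
    have h := Matrix.mul_nonsing_inv η hηnd
    calc ∑ b, η a b * η⁻¹ b c = (η * η⁻¹) a c := (Matrix.mul_apply).symm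
      _ = (1 : Matrix (Fin D) (Fin D) ℝ) a c := by rw [h]
      _ = _ := Matrix.one_apply
  have trace : ∑ ν : Fin D, ∑ ρ, η⁻¹ ν ρ * η ν ρ = (D:ℝ) := by
    calc ∑ ν : Fin D, ∑ ρ, η⁻¹ ν ρ * η ν ρ = ∑ ν : Fin D, (1:ℝ) := by
          refine Finset.sum_congr rfl fun ν _ => ?_
          rw [show ∑ ρ, η⁻¹ ν ρ * η ν ρ = ∑ ρ, η⁻¹ ν ρ * η ρ ν from
            Finset.sum_congr rfl fun ρ _ => by rw [hηsym ν ρ]]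
          simpa using hζη ν ν
      _ = (D:ℝ) := by simp
  have key1 : ∀ (E : ℝ), ∑ ν, ∑ ρ, η⁻¹ ν ρ * (η ν ρ * E) = (D:ℝ) * E := by
    intro E
    calc ∑ ν, ∑ ρ, η⁻¹ ν ρ * (η ν ρ * E)
        = (∑ ν : Fin D, ∑ ρ, η⁻¹ ν ρ * η ν ρ) * E := by
          rw [Finset.sum_mul]
          refine Finset.sum_congr rfl fun ν _ => ?_
          rw [Finset.sum_mul]
          exact Finset.sum_congr rfl fun ρ _ => by ring
      _ = (D:ℝ) * E := by rw [trace]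
  have key2 : ∀ (g : Fin D → ℝ) (μ : Fin D),
      ∑ ν, ∑ ρ, η⁻¹ ν ρ * (η μ ν * g ρ) = g μ := by
    intro g μ
    calc ∑ ν, ∑ ρ, η⁻¹ ν ρ * (η μ ν * g ρ)
        = ∑ ν, ∑ ρ, (η μ ν * η⁻¹ ν ρ) * g ρ := by
          refine Finset.sum_congr rfl fun ν _ => Finset.sum_congr rfl fun ρ _ => by ring
      _ = ∑ ρ, (∑ ν, η μ ν * η⁻¹ ν ρ) * g ρ := dsum_factor _ _
      _ = ∑ ρ, (if μ = ρ then 1 else 0) * g ρ := by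
          refine Finset.sum_congr rfl fun ρ _ => by rw [hηζ μ ρ]
      _ = g μ := by simp
  have key3 : ∀ (h : Fin D → ℝ) (σ : Fin D),
      ∑ ν, ∑ ρ, η⁻¹ ν ρ * (η σ ρ * h ν) = h σ := by
    intro h σ
    calc ∑ ν, ∑ ρ, η⁻¹ ν ρ * (η σ ρ * h ν)
        = ∑ ν, (∑ ρ, η⁻¹ ν ρ * η ρ σ) * h ν := by
          refine Finset.sum_congr rfl fun ν _ => ?_
          rw [Finset.sum_mul]
          exact Finset.sum_congr rfl fun ρ _ => by rw [hηsym σ ρ]; ring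
      _ = ∑ ν, (if ν = σ then 1 else 0) * h ν := by
          refine Finset.sum_congr rfl fun ν _ => by rw [hζη ν σ]
      _ = h σ := by simp
  have key4 : ∀ (c : ℝ) (h : Fin D → Fin D → ℝ),
      ∑ ν, ∑ ρ, η⁻¹ ν ρ * (c * h ν ρ) = c * ∑ ν, ∑ ρ, η⁻¹ ν ρ * h ν ρ := by
    intro c h
    rw [Finset.mul_sum]
    refine Finset.sum_congr rfl fun ν _ => ?_
    rw [Finset.mul_sum]
    exact Finset.sum_congr rfl fun ρ _ => by ring
  intro a b x
  have claim1 : ∀ σ μ, ((D:ℝ) - 2) * pd σ (pd μ (dvg k)) x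
      = - η μ σ * (∑ ν, ∑ ρ, η⁻¹ ν ρ * pd ν (pd ρ (dvg k)) x) := by
    intro σ μ
    have hs : ∑ ν, ∑ ρ, (η⁻¹ ν ρ * (η ν ρ * pd σ (pd μ (dvg k)) x)
          - η⁻¹ ν ρ * (η μ ν * pd σ (pd ρ (dvg k)) x))
        = ∑ ν, ∑ ρ, (η⁻¹ ν ρ * (η σ ρ * pd ν (pd μ (dvg k)) x)
          - η⁻¹ ν ρ * (η μ σ * pd ν (pd ρ (dvg k)) x)) := by
      refine Finset.sum_congr rfl fun ν _ => Finset.sum_congr rfl fun ρ _ => ?_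
      have := diamond σ μ ν ρ x
      ring_nf
      linear_combination η⁻¹ ν ρ * this
    simp only [Finset.sum_sub_distrib] at hs
    rw [key1, key2 (fun ρ => pd σ (pd ρ (dvg k)) x) μ,
      key3 (fun ν => pd ν (pd μ (dvg k)) x) σ,
      key4 (η μ σ) (fun ν ρ => pd ν (pd ρ (dvg k)) x)] at hs
    linear_combination hs
  have hs2 : ∑ σ, ∑ μ, η⁻¹ σ μ * (((D:ℝ) - 2) * pd σ (pd μ (dvg k)) x)
      = ∑ σ, ∑ μ, η⁻¹ σ μ * (- η μ σ
          * (∑ ν, ∑ ρ, η⁻¹ ν ρ * pd ν (pd ρ (dvg k)) x)) := by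
    refine Finset.sum_congr rfl fun σ _ => Finset.sum_congr rfl fun μ _ => ?_
    rw [claim1 σ μ]
  rw [key4 ((D:ℝ) - 2) (fun ν ρ => pd ν (pd ρ (dvg k)) x)] at hs2
  have rhs_eq : ∑ σ, ∑ μ, η⁻¹ σ μ * (- η μ σ
        * (∑ ν, ∑ ρ, η⁻¹ ν ρ * pd ν (pd ρ (dvg k)) x))
      = -((D:ℝ) * (∑ ν, ∑ ρ, η⁻¹ ν ρ * pd ν (pd ρ (dvg k)) x)) := by
    calc ∑ σ, ∑ μ, η⁻¹ σ μ * (- η μ σ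
          * (∑ ν, ∑ ρ, η⁻¹ ν ρ * pd ν (pd ρ (dvg k)) x))
        = ∑ σ : Fin D, (∑ μ, η⁻¹ σ μ * η μ σ)
            * (-(∑ ν, ∑ ρ, η⁻¹ ν ρ * pd ν (pd ρ (dvg k)) x)) := by
          refine Finset.sum_congr rfl fun σ _ => ?_
          rw [Finset.sum_mul]
          exact Finset.sum_congr rfl fun μ _ => by ring
      _ = ∑ σ : Fin D, (1:ℝ)
            * (-(∑ ν, ∑ ρ, η⁻¹ ν ρ * pd ν (pd ρ (dvg k)) x)) := by
          refine Finset.sum_congr rfl fun σ _ => ?_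
          rw [show ∑ μ, η⁻¹ σ μ * η μ σ = (1:ℝ) from by simpa using hζη σ σ]
      _ = -((D:ℝ) * (∑ ν, ∑ ρ, η⁻¹ ν ρ * pd ν (pd ρ (dvg k)) x)) := by
          rw [Finset.sum_const]
          simp [mul_comm]
  rw [rhs_eq] at hs2
  have h3 : (2*(D:ℝ) - 2) * (∑ ν, ∑ ρ, η⁻¹ ν ρ * pd ν (pd ρ (dvg k)) x) = 0 := by
    linear_combination hs2
  have hS0 : (∑ ν, ∑ ρ, η⁻¹ ν ρ * pd ν (pd ρ (dvg k)) x) = 0 := by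
    rcases mul_eq_zero.mp h3 with h | h
    · exfalso
      have h4 : (3:ℝ) ≤ (D:ℝ) := by exact_mod_cast hD
      linarith
    · exact h
  have hfin := claim1 a b
  rw [hS0] at hfin
  have h5 : ((D:ℝ) - 2) * pd a (pd b (dvg k)) x = 0 := by linarith [hfin]
  rcases mul_eq_zero.mp h5 with h | h
  · exfalso
    have h4 : (3:ℝ) ≤ (D:ℝ) := by exact_mod_cast hD
    linarith
  · exact h

/-- key algebraic identity for the quadratic part -/
lemma quad_identity (η : Matrix (Fin D) (Fin D) ℝ) (hηsym : ∀ μ ν, η μ ν = η ν μ)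
    (c : Fin D → ℝ) (dD : ℝ) (ρ : Fin D) (x : Fin D → ℝ) :
    (1/2) * ∑ a, ∑ b, (((η b ρ * c a + η a ρ * c b) - η a b * c ρ) / dD) * x a * x b
      = (∑ a, ∑ b, η a b * x a * x b) * (-(c ρ) / (2*dD))
        - 2 * (∑ σ, η ρ σ * x σ) * (∑ a, x a * (-(c a) / (2*dD))) := by
  have hQ : ∑ σ, η ρ σ * x σ = ∑ b, η b ρ * x b :=
    Finset.sum_congr rfl fun b _ => by rw [hηsym ρ b]
  have hL : ∑ a, x a * (-(c a) / (2*dD)) = (-(1:ℝ)/(2*dD)) * ∑ a, c a * x a := by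
    rw [Finset.mul_sum]
    exact Finset.sum_congr rfl fun a _ => by ring
  have hPQ : (∑ a, c a * x a) * (∑ b, η b ρ * x b)
      = ∑ a, ∑ b, (c a * x a) * (η b ρ * x b) := Finset.sum_mul_sum _ _ _ _
  have h2 : ∑ a, ∑ b, (c b * x b) * (η a ρ * x a)
      = ∑ a, ∑ b, (c a * x a) * (η b ρ * x b) := Finset.sum_comm
  have hmain : ∑ a, ∑ b, (((η b ρ * c a + η a ρ * c b) - η a b * c ρ) / dD) * x a * x b
      = (2/dD) * ((∑ a, c a * x a) * (∑ b, η b ρ * x b))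
        - (1/dD) * (c ρ * ∑ a, ∑ b, η a b * x a * x b) := by
    calc ∑ a, ∑ b, (((η b ρ * c a + η a ρ * c b) - η a b * c ρ) / dD) * x a * x b
        = ∑ a, ∑ b, ((1/dD) * ((c a * x a) * (η b ρ * x b))
            + ((1/dD) * ((c b * x b) * (η a ρ * x a))
              - (1/dD) * (c ρ * (η a b * x a * x b)))) :=
          Finset.sum_congr rfl fun a _ => Finset.sum_congr rfl fun b _ => by ring
      _ = (1/dD) * (∑ a, ∑ b, (c a * x a) * (η b ρ * x b))
            + ((1/dD) * (∑ a, ∑ b, (c b * x b) * (η a ρ * x a))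
              - (1/dD) * (c ρ * ∑ a, ∑ b, η a b * x a * x b)) := by
          simp only [Finset.sum_add_distrib, Finset.sum_sub_distrib, ← Finset.mul_sum]
      _ = (2/dD) * ((∑ a, c a * x a) * (∑ b, η b ρ * x b))
            - (1/dD) * (c ρ * ∑ a, ∑ b, η a b * x a * x b) := by
          rw [h2, ← hPQ]; ring
  rw [hQ, hL]
  linear_combination (1/2) * hmain

/-- the lowered vector field is the explicit conformal polynomial -/
lemma klow_poly (hD : 2 < D) (hηsym : ∀ μ ν, η μ ν = η ν μ) (hηnd : IsUnit η.det)
    (hk : ContDiff ℝ (⊤:ℕ∞) k)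
    (hck : ∀ μ ν x, pd μ (klow η k ν) x + pd ν (klow η k μ) x
      = 2 / (D:ℝ) * η μ ν * dvg k x) :
    ∀ ρ x, klow η k ρ x = klow η k ρ 0
      + (∑ ν, (pd ν (klow η k ρ) 0 - dvg k 0 / (D:ℝ) * η ρ ν) * x ν)
      + dvg k 0 / (D:ℝ) * (∑ σ, η ρ σ * x σ)
      + (∑ a, ∑ b, η a b * x a * x b) * (-(pd ρ (dvg k) 0) / (2*(D:ℝ)))
      - 2 * (∑ σ, η ρ σ * x σ) * (∑ a, x a * (-(pd a (dvg k) 0) / (2*(D:ℝ)))) := by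
  intro ρ x
  have hD0 : (D:ℝ) ≠ 0 := Nat.cast_ne_zero.mpr (by omega)
  have hH := hess_dvg hD hηsym hηnd hk hck
  have hc : ∀ ν x', pd ν (dvg k) x' = pd ν (dvg k) 0 := by
    intro ν x'
    exact eq_const_of_pd_zero
      ((pd_contDiff (dvg_contDiff hk) ν).differentiable (by norm_cast))
      (fun i y => hH i ν y) x'
  have hC : ∀ a b x', pd a (pd b (klow η k ρ)) x'
      = ((η b ρ * pd a (dvg k) 0 + η a ρ * pd b (dvg k) 0)
          - η a b * pd ρ (dvg k) 0) / (D:ℝ) := by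
    intro a b x'
    rw [eq_div_iff hD0]
    linear_combination pdpd_klow hk hD0 hηsym hck a b ρ x'
      + η b ρ * hc a x' + η a ρ * hc b x' - η a b * hc ρ x'
  have hrec := recon (klow_contDiff hk ρ)
    (fun a b => ((η b ρ * pd a (dvg k) 0 + η a ρ * pd b (dvg k) 0)
          - η a b * pd ρ (dvg k) 0) / (D:ℝ)) hC x
  have hquad := quad_identity η hηsym (fun ν => pd ν (dvg k) 0) (D:ℝ) ρ x
  have hlin : ∑ ν, (pd ν (klow η k ρ) 0 - dvg k 0 / (D:ℝ) * η ρ ν) * x ν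
      = (∑ ν, pd ν (klow η k ρ) 0 * x ν) - dvg k 0 / (D:ℝ) * ∑ σ, η ρ σ * x σ := by
    rw [Finset.mul_sum, ← Finset.sum_sub_distrib]
    exact Finset.sum_congr rfl fun ν _ => by ring
  linear_combination hrec - hlin + hquad

end Stmt15

open Stmt15 in
/-- in flat space of dimension `D > 2` with nondegenerate symmetric metric
`η`, every smooth solution of the conformal Killing equation
`∂_μ k_ν + ∂_ν k_μ = (2/D) η_{μν} ∂_ρ k^ρ` is of the form
`k^μ(x) = ξ^μ + λ^μ{}_ν x^ν + λ_D x^μ + (x·x) Λ_K^μ − 2 x^μ (x·Λ_K)` with `λ_{μν}`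
antisymmetric (translations, Lorentz rotations, dilatations, special conformal
transformations). -/
theorem stmt_15 (D : ℕ) (hD : 2 < D) (η : Matrix (Fin D) (Fin D) ℝ)
    (hηsym : ∀ μ ν, η μ ν = η ν μ) (hηnd : IsUnit η.det)
    (k : (Fin D → ℝ) → (Fin D → ℝ)) (hk : ContDiff ℝ (⊤ : ℕ∞) k)
    (hck : ∀ μ ν x,
      pd μ (fun y => ∑ σ, η ν σ * k y σ) x + pd ν (fun y => ∑ σ, η μ σ * k y σ) x
        = (2 / (D : ℝ)) * η μ ν * ∑ ρ, pd ρ (fun y => k y ρ) x) :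
    ∃ (ξ : Fin D → ℝ) (lam : Fin D → Fin D → ℝ) (lamD : ℝ) (ΛK : Fin D → ℝ),
      (∀ μ ν, ∑ ρ, η μ ρ * lam ρ ν = - ∑ ρ, η ν ρ * lam ρ μ) ∧
      (∀ x μ, k x μ = ξ μ + (∑ ν, lam μ ν * x ν) + lamD * x μ
        + (∑ a, ∑ b, η a b * x a * x b) * ΛK μ
        - 2 * x μ * (∑ a, ∑ b, η a b * x a * ΛK b)) := by
  have hD0 : (D:ℝ) ≠ 0 := Nat.cast_ne_zero.mpr (by omega)
  have hck' : ∀ μ ν x, pd μ (klow η k ν) x + pd ν (klow η k μ) x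
      = 2 / (D:ℝ) * η μ ν * dvg k x := fun μ ν x => hck μ ν x
  have hpoly := klow_poly hD hηsym hηnd hk hck'
  have hζη : ∀ a c, ∑ b, η⁻¹ a b * η b c = if a = c then 1 else 0 := by
    intro a c
    have h := Matrix.nonsing_inv_mul η hηnd
    calc ∑ b, η⁻¹ a b * η b c = (η⁻¹ * η) a c := (Matrix.mul_apply).symm
      _ = (1 : Matrix (Fin D) (Fin D) ℝ) a c := by rw [h]
      _ = _ := Matrix.one_apply
  have hηζ : ∀ a c, ∑ b, η a b * η⁻¹ b c = if a = c then 1 else 0 := by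
    intro a c
    have h := Matrix.mul_nonsing_inv η hηnd
    calc ∑ b, η a b * η⁻¹ b c = (η * η⁻¹) a c := (Matrix.mul_apply).symm
      _ = (1 : Matrix (Fin D) (Fin D) ℝ) a c := by rw [h]
      _ = _ := Matrix.one_apply
  refine ⟨fun μ => ∑ ν, η⁻¹ μ ν * klow η k ν 0,
    fun μ ν => ∑ c, η⁻¹ μ c * (pd ν (klow η k c) 0 - dvg k 0 / (D:ℝ) * η c ν),
    dvg k 0 / (D:ℝ),
    fun μ => ∑ ν, η⁻¹ μ ν * (-(pd ν (dvg k) 0) / (2*(D:ℝ))), ?_, ?_⟩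
  · -- antisymmetry
    have hlow : ∀ μ ν, (∑ ρ, η μ ρ
          * (∑ c, η⁻¹ ρ c * (pd ν (klow η k c) 0 - dvg k 0 / (D:ℝ) * η c ν)))
        = pd ν (klow η k μ) 0 - dvg k 0 / (D:ℝ) * η μ ν := by
      intro μ ν
      calc (∑ ρ, η μ ρ
            * (∑ c, η⁻¹ ρ c * (pd ν (klow η k c) 0 - dvg k 0 / (D:ℝ) * η c ν)))
          = ∑ ρ, ∑ c, (η μ ρ * η⁻¹ ρ c)
              * (pd ν (klow η k c) 0 - dvg k 0 / (D:ℝ) * η c ν) := by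
            refine Finset.sum_congr rfl fun ρ _ => ?_
            rw [Finset.mul_sum]
            exact Finset.sum_congr rfl fun c _ => by ring
        _ = ∑ c, (∑ ρ, η μ ρ * η⁻¹ ρ c)
              * (pd ν (klow η k c) 0 - dvg k 0 / (D:ℝ) * η c ν) := dsum_factor _ _
        _ = ∑ c, (if μ = c then 1 else 0)
              * (pd ν (klow η k c) 0 - dvg k 0 / (D:ℝ) * η c ν) := by
            refine Finset.sum_congr rfl fun c _ => by rw [hηζ μ c]
        _ = _ := by simp
    intro μ ν
    rw [hlow μ ν, hlow ν μ]
    linear_combination hck' μ ν 0 + dvg k 0 / (D:ℝ) * hηsym μ ν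
  · -- the formula
    intro x μ
    have hkval : k x μ = ∑ ν, η⁻¹ μ ν * klow η k ν x := by
      have h : ∑ ν, η⁻¹ μ ν * klow η k ν x = k x μ := by
        calc ∑ ν, η⁻¹ μ ν * klow η k ν x
            = ∑ ν, ∑ σ, (η⁻¹ μ ν * η ν σ) * k x σ := by
              refine Finset.sum_congr rfl fun ν _ => ?_
              rw [show klow η k ν x = ∑ σ, η ν σ * k x σ from rfl, Finset.mul_sum]
              exact Finset.sum_congr rfl fun σ _ => by ring
          _ = ∑ σ, (∑ ν, η⁻¹ μ ν * η ν σ) * k x σ := dsum_factor _ _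
          _ = ∑ σ, (if μ = σ then 1 else 0) * k x σ := by
              refine Finset.sum_congr rfl fun σ _ => by rw [hζη μ σ]
          _ = k x μ := by simp
      exact h.symm
    have t2 : ∑ ν, η⁻¹ μ ν
          * (∑ ν', (pd ν' (klow η k ν) 0 - dvg k 0 / (D:ℝ) * η ν ν') * x ν')
        = ∑ ν', (∑ c, η⁻¹ μ c
            * (pd ν' (klow η k c) 0 - dvg k 0 / (D:ℝ) * η c ν')) * x ν' := by
      calc ∑ ν, η⁻¹ μ ν
            * (∑ ν', (pd ν' (klow η k ν) 0 - dvg k 0 / (D:ℝ) * η ν ν') * x ν')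
          = ∑ ν, ∑ ν', (η⁻¹ μ ν
              * (pd ν' (klow η k ν) 0 - dvg k 0 / (D:ℝ) * η ν ν')) * x ν' := by
            refine Finset.sum_congr rfl fun ν _ => ?_
            rw [Finset.mul_sum]
            exact Finset.sum_congr rfl fun ν' _ => by ring
        _ = _ := dsum_factor _ _
    have t3 : ∑ ν, η⁻¹ μ ν * (dvg k 0 / (D:ℝ) * (∑ σ, η ν σ * x σ))
        = dvg k 0 / (D:ℝ) * x μ := by
      calc ∑ ν, η⁻¹ μ ν * (dvg k 0 / (D:ℝ) * (∑ σ, η ν σ * x σ))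
          = ∑ ν, ∑ σ, (η⁻¹ μ ν * η ν σ) * (dvg k 0 / (D:ℝ) * x σ) := by
            refine Finset.sum_congr rfl fun ν _ => ?_
            rw [show η⁻¹ μ ν * (dvg k 0 / (D:ℝ) * (∑ σ, η ν σ * x σ))
              = (η⁻¹ μ ν * (dvg k 0 / (D:ℝ))) * (∑ σ, η ν σ * x σ) from by ring,
              Finset.mul_sum]
            exact Finset.sum_congr rfl fun σ _ => by ring
        _ = ∑ σ, (∑ ν, η⁻¹ μ ν * η ν σ) * (dvg k 0 / (D:ℝ) * x σ) := dsum_factor _ _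
        _ = ∑ σ, (if μ = σ then 1 else 0) * (dvg k 0 / (D:ℝ) * x σ) := by
            refine Finset.sum_congr rfl fun σ _ => by rw [hζη μ σ]
        _ = dvg k 0 / (D:ℝ) * x μ := by simp
    have t4 : ∑ ν, η⁻¹ μ ν * ((∑ a, ∑ b, η a b * x a * x b)
          * (-(pd ν (dvg k) 0) / (2*(D:ℝ))))
        = (∑ a, ∑ b, η a b * x a * x b)
          * (∑ ν, η⁻¹ μ ν * (-(pd ν (dvg k) 0) / (2*(D:ℝ)))) := by
      rw [Finset.mul_sum]
      exact Finset.sum_congr rfl fun ν _ => by ring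
    have t5a : ∑ ν, η⁻¹ μ ν * (2 * (∑ σ, η ν σ * x σ)
          * (∑ a, x a * (-(pd a (dvg k) 0) / (2*(D:ℝ)))))
        = 2 * x μ * (∑ a, x a * (-(pd a (dvg k) 0) / (2*(D:ℝ)))) := by
      calc ∑ ν, η⁻¹ μ ν * (2 * (∑ σ, η ν σ * x σ)
            * (∑ a, x a * (-(pd a (dvg k) 0) / (2*(D:ℝ)))))
          = ∑ ν, ∑ σ, (η⁻¹ μ ν * η ν σ) * (2 * x σ
              * (∑ a, x a * (-(pd a (dvg k) 0) / (2*(D:ℝ))))) := by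
            refine Finset.sum_congr rfl fun ν _ => ?_
            rw [show η⁻¹ μ ν * (2 * (∑ σ, η ν σ * x σ)
                * (∑ a, x a * (-(pd a (dvg k) 0) / (2*(D:ℝ)))))
              = (η⁻¹ μ ν * 2 * (∑ a, x a * (-(pd a (dvg k) 0) / (2*(D:ℝ)))))
                * (∑ σ, η ν σ * x σ) from by ring,
              Finset.mul_sum]
            refine Finset.sum_congr rfl fun σ _ => by ring
        _ = ∑ σ, (∑ ν, η⁻¹ μ ν * η ν σ) * (2 * x σ
              * (∑ a, x a * (-(pd a (dvg k) 0) / (2*(D:ℝ))))) := dsum_factor _ _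
        _ = ∑ σ, (if μ = σ then 1 else 0) * (2 * x σ
              * (∑ a, x a * (-(pd a (dvg k) 0) / (2*(D:ℝ))))) := by
            refine Finset.sum_congr rfl fun σ _ => by rw [hζη μ σ]
        _ = _ := by simp
    have t5b : ∑ a, ∑ b, η a b * x a
          * (∑ c, η⁻¹ b c * (-(pd c (dvg k) 0) / (2*(D:ℝ))))
        = ∑ a, x a * (-(pd a (dvg k) 0) / (2*(D:ℝ))) := by
      refine Finset.sum_congr rfl fun a _ => ?_
      calc ∑ b, η a b * x a * (∑ c, η⁻¹ b c * (-(pd c (dvg k) 0) / (2*(D:ℝ))))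
          = ∑ b, ∑ c, (η a b * η⁻¹ b c)
              * (x a * (-(pd c (dvg k) 0) / (2*(D:ℝ)))) := by
            refine Finset.sum_congr rfl fun b _ => ?_
            rw [Finset.mul_sum]
            exact Finset.sum_congr rfl fun c _ => by ring
        _ = ∑ c, (∑ b, η a b * η⁻¹ b c)
              * (x a * (-(pd c (dvg k) 0) / (2*(D:ℝ)))) := dsum_factor _ _
        _ = ∑ c, (if a = c then 1 else 0)
              * (x a * (-(pd c (dvg k) 0) / (2*(D:ℝ)))) := by
            refine Finset.sum_congr rfl fun c _ => by rw [hηζ a c]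
        _ = x a * (-(pd a (dvg k) 0) / (2*(D:ℝ))) := by simp
    rw [hkval]
    calc ∑ ν, η⁻¹ μ ν * klow η k ν x
        = ∑ ν, η⁻¹ μ ν * (klow η k ν 0
          + (∑ ν', (pd ν' (klow η k ν) 0 - dvg k 0 / (D:ℝ) * η ν ν') * x ν')
          + dvg k 0 / (D:ℝ) * (∑ σ, η ν σ * x σ)
          + (∑ a, ∑ b, η a b * x a * x b) * (-(pd ν (dvg k) 0) / (2*(D:ℝ)))
          - 2 * (∑ σ, η ν σ * x σ)
            * (∑ a, x a * (-(pd a (dvg k) 0) / (2*(D:ℝ))))) := by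
          refine Finset.sum_congr rfl fun ν _ => by rw [hpoly ν x]
      _ = (∑ ν, η⁻¹ μ ν * klow η k ν 0)
          + (∑ ν, η⁻¹ μ ν
            * (∑ ν', (pd ν' (klow η k ν) 0 - dvg k 0 / (D:ℝ) * η ν ν') * x ν'))
          + (∑ ν, η⁻¹ μ ν * (dvg k 0 / (D:ℝ) * (∑ σ, η ν σ * x σ)))
          + (∑ ν, η⁻¹ μ ν * ((∑ a, ∑ b, η a b * x a * x b)
            * (-(pd ν (dvg k) 0) / (2*(D:ℝ)))))
          - (∑ ν, η⁻¹ μ ν * (2 * (∑ σ, η ν σ * x σ)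
            * (∑ a, x a * (-(pd a (dvg k) 0) / (2*(D:ℝ)))))) := by
          simp only [mul_add, mul_sub, Finset.sum_add_distrib, Finset.sum_sub_distrib]
      _ = _ := by rw [t2, t3, t4, t5a, ← t5b]
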